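/- For the ring R = (Z/2Z)^{ω} ≅ (P(ω), △, ∩) and every n ∈ ℕ there exists a finite index additive subgroup H of (R,+) such that the subgroup of (R,+) generated by R·H = {r·h : r ∈ R, h ∈ H} is not equal to the n-fold sumset (R·H)^{+n} = R·H + ⋯ + R·H. -/

import Mathlib

open Pointwise

namespace Stmt18Aux

/-- The auxiliary vector space `F_2^{n+1}`. -/
abbrev V (n : ℕ) : Type := Fin (n + 1) → ZMod 2

/-- Number of nonzero vectors. -/
noncomputable def N (n : ℕ) : ℕ := Fintype.card {v : V n // v ≠ 0}

/-- Enumeration of nonzero vectors. -/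
noncomputable def e (n : ℕ) : Fin (N n) ≃ {v : V n // v ≠ 0} :=
  (Fintype.equivFin _).symm

/-- Dot product on `V n`. -/
def dot (n : ℕ) (a v : V n) : ZMod 2 := ∑ j, a j * v j

lemma dot_add (n : ℕ) (a b v : V n) : dot n (a + b) v = dot n a v + dot n b v := by
  simp [dot, add_mul, Finset.sum_add_distrib]

/-- Labelling of coordinates by (nonzero, for `k < N n`) vectors. -/
noncomputable def c (n : ℕ) (k : ℕ) : V n :=
  if h : k < N n then (e n ⟨k, h⟩).1 else 0

lemma c_ne_zero (n : ℕ) {k : ℕ} (h : k < N n) : c n k ≠ 0 := by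
  simpa [c, h] using (e n ⟨k, h⟩).2

lemma c_surj (n : ℕ) {v : V n} (hv : v ≠ 0) : ∃ k, k < N n ∧ c n k = v := by
  refine ⟨((e n).symm ⟨v, hv⟩ : Fin (N n)), ((e n).symm ⟨v, hv⟩).isLt, ?_⟩
  simp only [c, dif_pos ((e n).symm ⟨v, hv⟩).isLt]
  have : (⟨((e n).symm ⟨v, hv⟩ : Fin (N n)), ((e n).symm ⟨v, hv⟩).isLt⟩ : Fin (N n))
      = (e n).symm ⟨v, hv⟩ := by ext; rfl
  rw [this, Equiv.apply_symm_apply]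

/-- The finite index subgroup. -/
noncomputable def H (n : ℕ) : AddSubgroup (ℕ → ZMod 2) where
  carrier := {h | ∃ a : V n, ∀ k, k < N n → h k = dot n a (c n k)}
  zero_mem' := ⟨0, by intro k hk; simp [dot]⟩
  add_mem' := by
    rintro x y ⟨a, ha⟩ ⟨b, hb⟩
    exact ⟨a + b, fun k hk => by
      simp only [Pi.add_apply, ha k hk, hb k hk, dot_add]⟩
  neg_mem' := by
    rintro x ⟨a, ha⟩
    refine ⟨a, fun k hk => ?_⟩
    simp [CharTwo.neg_eq, ha k hk]

lemma mem_H_iff (n : ℕ) (h : ℕ → ZMod 2) :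
    h ∈ H n ↔ ∃ a : V n, ∀ k, k < N n → h k = dot n a (c n k) := Iff.rfl

lemma finiteIndex (n : ℕ) : (H n).FiniteIndex := by
  classical
  let π : (ℕ → ZMod 2) →+ (Fin (N n) → ZMod 2) :=
    AddMonoidHom.mk' (fun h j => h j) (fun _ _ => rfl)
  have hle : π.ker ≤ H n := by
    intro h hh
    refine ⟨0, fun k hk => ?_⟩
    have : h k = 0 := congrFun hh ⟨k, hk⟩
    simp [this, dot]
  have h1 : Finite ((ℕ → ZMod 2) ⧸ π.ker) :=
    Finite.of_equiv _ (QuotientAddGroup.quotientKerEquivRange π).symm.toEquiv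
  have h2 : Finite ((ℕ → ZMod 2) ⧸ H n) := by
    refine Finite.of_surjective
      (QuotientAddGroup.map π.ker (H n) (AddMonoidHom.id _) (by simpa using hle)) ?_
    intro x
    obtain ⟨g, rfl⟩ := QuotientAddGroup.mk'_surjective (H n) x
    exact ⟨QuotientAddGroup.mk g, rfl⟩
  exact AddSubgroup.finiteIndex_of_finite_quotient

lemma zmod2_eq_one : ∀ {x : ZMod 2}, x ≠ 0 → x = 1 := by decide

/-- Pick a coordinate where a nonzero vector is 1. -/
noncomputable def idx (n : ℕ) (v : V n) : Fin (n + 1) :=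
  if h : ∃ i, v i = 1 then h.choose else 0

lemma idx_spec (n : ℕ) {v : V n} (hv : v ≠ 0) : v (idx n v) = 1 := by
  have : ∃ i, v i = 1 := by
    obtain ⟨i, hi⟩ := Function.ne_iff.mp hv
    have hne : v i ≠ 0 := hi
    exact ⟨i, zmod2_eq_one hne⟩
  simp only [idx, dif_pos this]
  exact this.choose_spec

lemma dot_single (n : ℕ) (i : Fin (n + 1)) (v : V n) :
    dot n (Pi.single i 1) v = v i := by
  simp only [dot, Pi.single_apply]
  rw [Finset.sum_eq_single i]
  · simp
  · intro b _ hb; simp [hb]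
  · intro hi; exact absurd (Finset.mem_univ i) hi

/-- Existence of a nonzero common "orthogonal" vector to `n` vectors. -/
lemma exists_ortho (n : ℕ) (a : Fin n → V n) :
    ∃ v : V n, v ≠ 0 ∧ ∀ i, dot n (a i) v = 0 := by
  classical
  haveI : Fact (Nat.Prime 2) := ⟨by norm_num⟩
  let L : V n →ₗ[ZMod 2] (Fin n → ZMod 2) :=
    { toFun := fun v i => dot n (a i) v
      map_add' := by
        intro v w; funext i
        simp [dot, mul_add, Finset.sum_add_distrib]
      map_smul' := by
        intro m v; funext i
        simp [dot, Finset.mul_sum, mul_left_comm] }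
  have hker : LinearMap.ker L ≠ ⊥ := by
    intro h
    have hinj : Function.Injective L := LinearMap.ker_eq_bot.mp h
    have := LinearMap.finrank_le_finrank_of_injective hinj
    rw [Module.finrank_pi (ZMod 2), Module.finrank_pi (ZMod 2)] at this
    simp at this
  obtain ⟨v, hv, hvne⟩ := Submodule.exists_mem_ne_zero_of_ne_bot hker
  refine ⟨v, hvne, fun i => ?_⟩
  have : L v = 0 := hv
  exact congrFun this i

end Stmt18Aux

open Stmt18Aux

/-- For R = (Z/2Z)^ω and every n there is a finite index additive subgroup H of
(R,+) such that the subgroup generated by R·H is not the n-fold sumset of R·H. -/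
theorem stmt_18 (n : ℕ) :
    ∃ H : AddSubgroup (ℕ → ZMod 2), H.FiniteIndex ∧
      (AddSubgroup.closure (Set.univ * (H : Set (ℕ → ZMod 2))) :
          Set (ℕ → ZMod 2)) ≠
        {x : ℕ → ZMod 2 | ∃ f : Fin n → (ℕ → ZMod 2),
          (∀ i, f i ∈ Set.univ * (H : Set (ℕ → ZMod 2))) ∧ ∑ i, f i = x} := by
  classical
  refine ⟨H n, finiteIndex n, ?_⟩
  intro heq
  -- the all-ones vector
  set ω : ℕ → ZMod 2 := fun _ => 1 with hω
  -- summands covering ω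
  have hmemH : ∀ h : ℕ → ZMod 2, h ∈ H n → h ∈ Set.univ * ((H n : Set (ℕ → ZMod 2))) := by
    intro h hh
    have := Set.mul_mem_mul (Set.mem_univ (1 : ℕ → ZMod 2)) hh
    simpa using this
  -- tail : indicator of k ≥ N n
  set tail : ℕ → ZMod 2 := fun k => if k < N n then 0 else 1 with htail
  have htailH : tail ∈ H n := ⟨0, fun k hk => by simp [htail, hk, dot]⟩
  -- pieces
  set x : Fin (n + 1) → ℕ → ZMod 2 := fun i k =>
    if k < N n ∧ idx n (c n k) = i then 1 else 0 with hx
  have hxmem : ∀ i, x i ∈ Set.univ * ((H n : Set (ℕ → ZMod 2))) := by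
    intro i
    set h : ℕ → ZMod 2 := fun k => dot n (Pi.single i 1) (c n k) with hh
    have hhH : h ∈ H n := ⟨Pi.single i 1, fun k hk => rfl⟩
    set r : ℕ → ZMod 2 := fun k => if k < N n ∧ idx n (c n k) = i then 1 else 0 with hr
    have : r * h = x i := by
      funext k
      by_cases hk : k < N n ∧ idx n (c n k) = i
      · have hne : c n k ≠ 0 := c_ne_zero n hk.1
        have : h k = 1 := by
          rw [hh]; dsimp only
          rw [dot_single, ← hk.2]
          exact idx_spec n hne
        simp [hr, hx, hk, this]
      · simp [hr, hx, hk]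
    rw [← this]
    exact Set.mul_mem_mul (Set.mem_univ r) hhH
  -- ω is in the closure
  have hωcl : ω ∈ (AddSubgroup.closure
      (Set.univ * ((H n) : Set (ℕ → ZMod 2))) : Set (ℕ → ZMod 2)) := by
    have hdecomp : ω = tail + ∑ i, x i := by
      funext k
      by_cases hk : k < N n
      · have hne : c n k ≠ 0 := c_ne_zero n hk
        have hsum : (∑ i, x i) k = ∑ i, x i k := by
          simp [Finset.sum_apply]
        have : ∑ i, x i k = 1 := by
          rw [Finset.sum_eq_single (idx n (c n k))]
          · simp [hx, hk]
          · intro b _ hb; simp [hx, hk, Ne.symm hb]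
          · intro hmem; exact absurd (Finset.mem_univ _) hmem
        simp only [Pi.add_apply, hsum, this, htail, hω, hk, if_pos, if_true]
        simp
      · have hsum : (∑ i, x i) k = ∑ i, x i k := by
          simp [Finset.sum_apply]
        have : ∑ i, x i k = 0 := by
          apply Finset.sum_eq_zero
          intro i _
          simp [hx, hk]
        simp [Pi.add_apply, hsum, this, htail, hω, hk]
    rw [hdecomp]
    refine AddSubgroup.add_mem _ (AddSubgroup.subset_closure (hmemH tail htailH)) ?_
    exact AddSubgroup.sum_mem _ (fun i _ => AddSubgroup.subset_closure (hxmem i))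
  -- but ω is not a sum of n elements of R·H
  rw [heq] at hωcl
  obtain ⟨f, hf, hfsum⟩ := hωcl
  have key : ∀ i, ∃ a : V n, ∀ k, k < N n → dot n a (c n k) = 0 → f i k = 0 := by
    intro i
    obtain ⟨r, -, h, hh, hrh⟩ := hf i
    obtain ⟨a, ha⟩ := hh
    refine ⟨a, fun k hk hdot => ?_⟩
    have : f i k = r k * h k := by rw [← hrh]; rfl
    rw [this, ha k hk, hdot, mul_zero]
  choose a ha using key
  obtain ⟨v, hvne, hvdot⟩ := exists_ortho n a
  obtain ⟨k, hk, hck⟩ := c_surj n hvne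
  have hzero : ∀ i, f i k = 0 := fun i => ha i k hk (by rw [hck]; exact hvdot i)
  have h1 : (∑ i, f i) k = 0 := by
    have : (∑ i, f i) k = ∑ i, f i k := by simp [Finset.sum_apply]
    rw [this]
    exact Finset.sum_eq_zero fun i _ => hzero i
  rw [hfsum] at h1
  simp only [hω] at h1
  exact one_ne_zero h1
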